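/- For β > 1 there exists a unique m > 0 with m = tanh(βm); moreover the function g(u) = −βu²/2 + log cosh(βu) on ℝ is maximized exactly at u = ±m, and in particular g(m) ≥ g(u) for all u. -/

import Mathlib

open Real Set

private lemma hasDerivAt_tanhb (β u : ℝ) :
    HasDerivAt (fun u => Real.tanh (β * u)) (β / Real.cosh (β * u) ^ 2) u := by
  have h1 : HasDerivAt (fun u : ℝ => β * u) β u := by
    simpa using (hasDerivAt_id u).const_mul β
  have hs : HasDerivAt (fun u => Real.sinh (β * u)) (Real.cosh (β * u) * β) u := h1.sinh
  have hc : HasDerivAt (fun u => Real.cosh (β * u)) (Real.sinh (β * u) * β) u := h1.cosh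
  have hne : Real.cosh (β * u) ≠ 0 := (Real.cosh_pos _).ne'
  have := hs.div hc hne
  have heq : ((fun u => Real.sinh (β * u)) / fun u => Real.cosh (β * u))
      = fun u => Real.tanh (β * u) := by
    funext v; simp only [Pi.div_apply, Real.tanh_eq_sinh_div_cosh]
  rw [heq] at this
  refine this.congr_deriv ?_
  have h2 : Real.cosh (β*u) ^ 2 - Real.sinh (β*u) ^ 2 = 1 := Real.cosh_sq_sub_sinh_sq _
  field_simp
  linear_combination β * h2

private lemma hasDerivAt_gfun (β u : ℝ) :
    HasDerivAt (fun u => -β * u ^ 2 / 2 + Real.log (Real.cosh (β * u)))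
      (β * (Real.tanh (β * u) - u)) u := by
  have h1 : HasDerivAt (fun u : ℝ => β * u) β u := by
    simpa using (hasDerivAt_id u).const_mul β
  have hc : HasDerivAt (fun u => Real.cosh (β * u)) (Real.sinh (β * u) * β) u := h1.cosh
  have h3 := hc.log (Real.cosh_pos (β*u)).ne'
  have h4 : HasDerivAt (fun u : ℝ => -β * u ^ 2 / 2) (-β * u) u := by
    have := ((hasDerivAt_pow 2 u).const_mul (-β)).div_const 2
    refine this.congr_deriv ?_; push_cast; ring
  refine (h4.add h3).congr_deriv ?_
  rw [Real.tanh_eq_sinh_div_cosh]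
  have hne : Real.cosh (β * u) ≠ 0 := (Real.cosh_pos _).ne'
  field_simp
  ring

private lemma continuous_tanh' : Continuous Real.tanh := by
  have : Real.tanh = fun x => Real.sinh x / Real.cosh x := funext Real.tanh_eq_sinh_div_cosh
  rw [this]
  exact Real.continuous_sinh.div Real.continuous_cosh fun x => (Real.cosh_pos x).ne'

private lemma tanh_lt_one' (x : ℝ) : Real.tanh x < 1 := by
  rw [Real.tanh_eq_sinh_div_cosh, div_lt_one (Real.cosh_pos x)]
  exact Real.sinh_lt_cosh x

private lemma tanhb_strictConcave (β : ℝ) (hβ : 0 < β) :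
    StrictConcaveOn ℝ (Set.Ici (0:ℝ)) (fun u => Real.tanh (β * u)) := by
  apply StrictAntiOn.strictConcaveOn_of_deriv (convex_Ici 0)
  · exact (continuous_tanh'.comp (continuous_const.mul continuous_id)).continuousOn
  · have hderiv : deriv (fun u => Real.tanh (β * u)) = fun u => β / Real.cosh (β * u) ^ 2 := by
      funext v; exact (hasDerivAt_tanhb β v).deriv
    rw [hderiv, interior_Ici]
    intro x hx y hy hxy
    have hx0 : (0:ℝ) < x := hx
    apply div_lt_div_of_pos_left hβ (by positivity)
    have hy0 : (0:ℝ) < y := lt_trans hx0 hxy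
    have h1 : Real.cosh (β * x) < Real.cosh (β * y) :=
      Real.cosh_strictMonoOn (mul_nonneg hβ.le hx0.le) (mul_nonneg hβ.le hy0.le)
        (by nlinarith)
    nlinarith [Real.cosh_pos (β * x), Real.cosh_pos (β * y)]

/-- for `β > 1` there is a unique `m > 0` with `m = tanh(βm)`; moreover
`g(u) = −βu²/2 + log cosh(βu)` is maximized exactly at `u = ±m`; in particular
`g(m) ≥ g(u)` for all `u`. -/
theorem curieWeiss_fixed_point (β : ℝ) (hβ : 1 < β) :
    ∃ m : ℝ, 0 < m ∧ m = Real.tanh (β * m) ∧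
      (∀ m' : ℝ, 0 < m' → m' = Real.tanh (β * m') → m' = m) ∧
      (∀ u : ℝ, -β * u ^ 2 / 2 + Real.log (Real.cosh (β * u))
          ≤ -β * m ^ 2 / 2 + Real.log (Real.cosh (β * m))) ∧
      (∀ u : ℝ, -β * u ^ 2 / 2 + Real.log (Real.cosh (β * u))
          = -β * m ^ 2 / 2 + Real.log (Real.cosh (β * m)) → u = m ∨ u = -m) := by
  have hβ0 : (0:ℝ) < β := lt_trans one_pos hβ
  set φ : ℝ → ℝ := fun u => Real.tanh (β * u) - u with hφdef
  have hφcont : Continuous φ :=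
    (continuous_tanh'.comp (continuous_const.mul continuous_id)).sub continuous_id
  -- a small δ with φ δ > 0
  set δ : ℝ := Real.log β / (4 * β) with hδdef
  have hlogβ : 0 < Real.log β := Real.log_pos hβ
  have hδ0 : 0 < δ := by positivity
  have hδ1 : δ < 1 := by
    have : Real.log β < β := lt_trans (Real.log_lt_sub_one_of_pos hβ0 (by linarith)) (by linarith)
    rw [hδdef, div_lt_one (by positivity)]
    nlinarith
  have hφδ : 0 < φ δ := by
    have hmono : StrictMonoOn φ (Set.Icc 0 δ) := by
      apply strictMonoOn_of_deriv_pos (convex_Icc 0 δ) hφcont.continuousOn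
      intro x hx
      rw [interior_Icc] at hx
      have hderiv : deriv φ x = β / Real.cosh (β * x) ^ 2 - 1 := by
        have : HasDerivAt φ (β / Real.cosh (β * x) ^ 2 - 1) x :=
          (hasDerivAt_tanhb β x).sub (hasDerivAt_id x)
        exact this.deriv
      rw [hderiv]
      have hbx : 0 < β * x := mul_pos hβ0 hx.1
      have hcosh_le : Real.cosh (β * x) ≤ Real.exp (β * x) := by
        rw [Real.cosh_eq]
        have h1 : Real.exp (-(β*x)) ≤ Real.exp (β*x) := Real.exp_le_exp.2 (by linarith)
        linarith
      have hxδ : x < δ := hx.2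
      have hexp : Real.exp (β * x) ^ 2 < β := by
        rw [sq, ← Real.exp_add]
        have hxd : x < Real.log β / (4 * β) := hxδ
        rw [lt_div_iff₀ (by linarith : (0:ℝ) < 4 * β)] at hxd
        have h2 : β * x + β * x < Real.log β := by nlinarith
        calc Real.exp (β * x + β * x) < Real.exp (Real.log β) := Real.exp_lt_exp.2 h2
          _ = β := Real.exp_log hβ0
      have hc2 : Real.cosh (β * x) ^ 2 < β := by
        have := Real.cosh_pos (β * x)
        nlinarith [Real.exp_pos (β * x)]
      have := Real.cosh_pos (β * x)
      rw [sub_pos, lt_div_iff₀ (by positivity)]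
      linarith
    have := hmono (Set.left_mem_Icc.2 hδ0.le) (Set.right_mem_Icc.2 hδ0.le) hδ0
    simpa [hφdef] using this
  have hφ1 : φ 1 < 0 := by
    have := tanh_lt_one' (β * 1)
    simp only [hφdef]
    linarith
  -- IVT
  obtain ⟨m, hmIcc, hm0⟩ : ∃ m ∈ Set.Icc δ 1, φ m = 0 := by
    have := intermediate_value_Icc' hδ1.le hφcont.continuousOn
      (Set.mem_Icc.2 ⟨hφ1.le, hφδ.le⟩)
    obtain ⟨m, hm, hmeq⟩ := this
    exact ⟨m, hm, hmeq⟩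
  have hmpos : 0 < m := lt_of_lt_of_le hδ0 hmIcc.1
  have htm : Real.tanh (β * m) = m := by
    have : Real.tanh (β * m) - m = 0 := hm0
    linarith
  -- strict concavity consequences
  have hcc := tanhb_strictConcave β hβ0
  have key1 : ∀ u, 0 < u → u < m → u < Real.tanh (β * u) := by
    intro u hu hum
    have hb : 0 < u / m := by positivity
    have ha : 0 < 1 - u / m := by
      rw [sub_pos, div_lt_one hmpos]; exact hum
    have := hcc.2 (Set.mem_Ici.2 le_rfl) (Set.mem_Ici.2 hmpos.le) (by linarith : (0:ℝ) ≠ m)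
      ha hb (by ring)
    simp only [smul_eq_mul, mul_zero, Real.tanh_zero, htm, zero_add] at this
    have heq : u / m * m = u := div_mul_cancel₀ u hmpos.ne'
    rw [heq] at this
    linarith
  have key2 : ∀ u, m < u → Real.tanh (β * u) < u := by
    intro u hmu
    have hu : 0 < u := lt_trans hmpos hmu
    have hb : 0 < m / u := by positivity
    have ha : 0 < 1 - m / u := by
      rw [sub_pos, div_lt_one hu]; exact hmu
    have := hcc.2 (Set.mem_Ici.2 le_rfl) (Set.mem_Ici.2 hu.le) (by linarith : (0:ℝ) ≠ u)
      ha hb (by ring)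
    simp only [smul_eq_mul, mul_zero, Real.tanh_zero, zero_add] at this
    have heq : m / u * u = m := div_mul_cancel₀ m hu.ne'
    rw [heq, htm] at this
    rw [div_mul_eq_mul_div, div_lt_iff₀ hu] at this
    exact lt_of_mul_lt_mul_left (by linarith) hmpos.le
  -- the function g
  set g : ℝ → ℝ := fun u => -β * u ^ 2 / 2 + Real.log (Real.cosh (β * u)) with hgdef
  have hgdiff : Differentiable ℝ g := fun u => (hasDerivAt_gfun β u).differentiableAt
  have hgderiv : deriv g = fun u => β * (Real.tanh (β * u) - u) := by
    funext v; exact (hasDerivAt_gfun β v).deriv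
  have hmono : StrictMonoOn g (Set.Icc 0 m) := by
    apply strictMonoOn_of_deriv_pos (convex_Icc 0 m) hgdiff.continuous.continuousOn
    intro x hx
    rw [interior_Icc] at hx
    rw [hgderiv]
    show 0 < β * (Real.tanh (β * x) - x)
    have := key1 x hx.1 hx.2
    nlinarith
  have hanti : StrictAntiOn g (Set.Ici m) := by
    apply strictAntiOn_of_deriv_neg (convex_Ici m) hgdiff.continuous.continuousOn
    intro x hx
    rw [interior_Ici] at hx
    rw [hgderiv]
    show β * (Real.tanh (β * x) - x) < 0
    have := key2 x hx
    nlinarith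
  have heven : ∀ u, g (-u) = g u := by
    intro u
    simp only [hgdef, mul_neg, Real.cosh_neg, neg_sq]
  have hmax0 : ∀ u, 0 ≤ u → u ≠ m → g u < g m := by
    intro u hu hne
    rcases lt_or_gt_of_ne hne with h | h
    · exact hmono (Set.mem_Icc.2 ⟨hu, h.le⟩) (Set.mem_Icc.2 ⟨hmpos.le, le_rfl⟩) h
    · exact hanti (Set.mem_Ici.2 le_rfl) (Set.mem_Ici.2 h.le) h
  have hmax : ∀ u, g u ≤ g m := by
    intro u
    rcases le_or_gt 0 u with hu | hu
    · rcases eq_or_ne u m with h | h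
      · rw [h]
      · exact (hmax0 u hu h).le
    · have h2 : g u = g (-u) := (heven u).symm
      rcases eq_or_ne (-u) m with h | h
      · rw [h2, h]
      · exact h2 ▸ (hmax0 (-u) (by linarith) h).le
  refine ⟨m, hmpos, htm.symm, ?_, hmax, ?_⟩
  · intro m' hm'0 hm'eq
    rcases lt_trichotomy m' m with h | h | h
    · exact absurd (key1 m' hm'0 h) (by rw [← hm'eq]; exact lt_irrefl m')
    · exact h
    · exact absurd (key2 m' h) (by rw [← hm'eq]; exact lt_irrefl m')
  · intro u hequ
    rcases le_or_gt 0 u with hu | hu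
    · left
      by_contra hne
      exact absurd hequ (ne_of_lt (hmax0 u hu hne))
    · right
      by_contra hne
      have h1 : -u ≠ m := fun h => hne (by linarith)
      have := hmax0 (-u) (by linarith) h1
      rw [heven] at this
      exact absurd hequ (ne_of_lt this)
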